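/- arXiv:1907.05699 — 3 statements merged into one kernel-verified Lean document; each statement's English description precedes it below -/
import Mathlib

section
/- Let β, v : ℝ³ → ℝ³ be twice continuously differentiable vector fields. Then, pointwise on ℝ³, curl((β·∇)v) = (β·∇)(curl v) + ((∇β)ᵗ × ∇v), where ∇v denotes the Jacobian matrix with entries (∇v)_{ij} = ∂_j v_i and × is the row-wise matrix cross product defined in the context. -/
/-- Partial derivative in direction `j` of a scalar function on `ℝ³`. -/
noncomputable def pd3 (j : Fin 3) (f : (Fin 3 → ℝ) → ℝ) (x : Fin 3 → ℝ) : ℝ :=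
  fderiv ℝ f x (Pi.single j 1)

lemma contDiff_pd3 {f : (Fin 3 → ℝ) → ℝ} (hf : ContDiff ℝ 2 f) (j : Fin 3) :
    ContDiff ℝ 1 (pd3 j f) := by
  have h : ContDiff ℝ 1 (fderiv ℝ f) := hf.fderiv_right (le_refl _)
  exact h.clm_apply contDiff_const

lemma pd3_comm {f : (Fin 3 → ℝ) → ℝ} (hf : ContDiff ℝ 2 f) (i j : Fin 3) (x : Fin 3 → ℝ) :
    pd3 i (pd3 j f) x = pd3 j (pd3 i f) x := by
  have h1 : DifferentiableAt ℝ (fderiv ℝ f) x :=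
    ((hf.fderiv_right (le_refl _)).differentiable one_ne_zero) x
  have key : ∀ a b : Fin 3, pd3 a (pd3 b f) x
      = fderiv ℝ (fderiv ℝ f) x (Pi.single a 1) (Pi.single b 1) := by
    intro a b
    have h2 := fderiv_clm_apply h1 (differentiableAt_const (Pi.single b (1:ℝ)))
    have heq : pd3 b f = fun y => (fderiv ℝ f y) (Pi.single b 1) := rfl
    simp only [pd3, heq, h2]
    simp
  rw [key, key]
  exact (hf.contDiffAt.isSymmSndFDerivAt (by simp [minSmoothness_of_isRCLikeNormedField])) _ _

lemma pd3_sub {f g : (Fin 3 → ℝ) → ℝ} {x : Fin 3 → ℝ} (hf : DifferentiableAt ℝ f x)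
    (hg : DifferentiableAt ℝ g x) (j : Fin 3) :
    pd3 j (fun y => f y - g y) x = pd3 j f x - pd3 j g x := by
  simp [pd3, fderiv_fun_sub hf hg]

lemma pd3_mul {f g : (Fin 3 → ℝ) → ℝ} {x : Fin 3 → ℝ} (hf : DifferentiableAt ℝ f x)
    (hg : DifferentiableAt ℝ g x) (j : Fin 3) :
    pd3 j (fun y => f y * g y) x = pd3 j f x * g x + f x * pd3 j g x := by
  simp [pd3, fderiv_fun_mul hf hg]; ring

lemma pd3_sum {g : Fin 3 → (Fin 3 → ℝ) → ℝ} {x : Fin 3 → ℝ}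
    (hg : ∀ j, DifferentiableAt ℝ (g j) x) (i : Fin 3) :
    pd3 i (fun y => ∑ j, g j y) x = ∑ j, pd3 i (g j) x := by
  simp [pd3, fderiv_fun_sum (fun j _ => hg j)]

/-- The curl of a vector field on `ℝ³`:
`curl v = (∂₂v₃ − ∂₃v₂, ∂₃v₁ − ∂₁v₃, ∂₁v₂ − ∂₂v₁)`. -/
noncomputable def curl3 (v : (Fin 3 → ℝ) → Fin 3 → ℝ) (x : Fin 3 → ℝ) : Fin 3 → ℝ :=
  ![pd3 1 (fun y => v y 2) x - pd3 2 (fun y => v y 1) x,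
    pd3 2 (fun y => v y 0) x - pd3 0 (fun y => v y 2) x,
    pd3 0 (fun y => v y 1) x - pd3 1 (fun y => v y 0) x]

/-- The convective derivative `(β·∇)v`, with components `((β·∇)v)_i = Σ_j β_j ∂_j v_i`. -/
noncomputable def convect3 (β v : (Fin 3 → ℝ) → Fin 3 → ℝ) (x : Fin 3 → ℝ) : Fin 3 → ℝ :=
  fun i => ∑ j, β x j * pd3 j (fun y => v y i) x

/-- For `3×3` matrices `A`, `B` with rows `A_i`, `B_i`, the row-wise matrix cross product
`C = A × B`, with `C₁ = A₂·B₃ − A₃·B₂`, `C₂ = −(A₁·B₃ − A₃·B₁)`, `C₃ = A₁·B₂ − A₂·B₁`. -/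
def mcross3 (A B : Fin 3 → Fin 3 → ℝ) : Fin 3 → ℝ :=
  ![(∑ j, A 1 j * B 2 j) - (∑ j, A 2 j * B 1 j),
    -((∑ j, A 0 j * B 2 j) - (∑ j, A 2 j * B 0 j)),
    (∑ j, A 0 j * B 1 j) - (∑ j, A 1 j * B 0 j)]

/-- `curl((β·∇)v) = (β·∇)(curl v) + ((∇β)ᵗ × ∇v)` for `C²` vector fields on `ℝ³`,
where `(∇v)_{ij} = ∂_j v_i` is the Jacobian and `(∇β)ᵗ` its transpose for `β`. -/
theorem stmt0 (β v : (Fin 3 → ℝ) → Fin 3 → ℝ)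
    (hβ : ContDiff ℝ 2 β) (hv : ContDiff ℝ 2 v) (x : Fin 3 → ℝ) :
    curl3 (convect3 β v) x
      = fun i => convect3 β (curl3 v) x i
          + mcross3 (fun i j => pd3 i (fun y => β y j) x)
              (fun i j => pd3 j (fun y => v y i) x) i := by
  have hβc : ∀ k, ContDiff ℝ 2 (fun y => β y k) := fun k =>
    (ContinuousLinearMap.proj k (R := ℝ) (φ := fun _ : Fin 3 => ℝ)).contDiff.comp hβ
  have hvc : ∀ k, ContDiff ℝ 2 (fun y => v y k) := fun k =>
    (ContinuousLinearMap.proj k (R := ℝ) (φ := fun _ : Fin 3 => ℝ)).contDiff.comp hv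
  have dβ : ∀ k (y : Fin 3 → ℝ), DifferentiableAt ℝ (fun y => β y k) y := fun k y =>
    ((hβc k).differentiable two_ne_zero) y
  have dD : ∀ j k (y : Fin 3 → ℝ), DifferentiableAt ℝ (pd3 j (fun z => v z k)) y :=
    fun j k y => ((contDiff_pd3 (hvc k) j).differentiable one_ne_zero) y
  -- expansion of pd3 of convect components (in Fin.sum_univ_three-expanded form)
  have E : ∀ i k : Fin 3, pd3 i (fun y => β y 0 * pd3 0 (fun z => v z k) y
        + β y 1 * pd3 1 (fun z => v z k) y + β y 2 * pd3 2 (fun z => v z k) y) x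
      = ∑ j, (pd3 i (fun y => β y j) x * pd3 j (fun z => v z k) x
          + β x j * pd3 j (pd3 i (fun z => v z k)) x) := by
    intro i k
    have hfun : (fun y => β y 0 * pd3 0 (fun z => v z k) y
        + β y 1 * pd3 1 (fun z => v z k) y + β y 2 * pd3 2 (fun z => v z k) y)
        = fun y => ∑ j, β y j * pd3 j (fun z => v z k) y := by
      funext y; rw [Fin.sum_univ_three]
    rw [hfun, pd3_sum (g := fun j y => β y j * pd3 j (fun z => v z k) y) (fun j => (dβ j x).mul (dD j k x)) i]
    refine Finset.sum_congr rfl fun j _ => ?_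
    rw [pd3_mul (dβ j x) (dD j k x), pd3_comm (hvc k) i j]
  -- pd3 of curl components
  have F : ∀ (j a b c d : Fin 3),
      pd3 j (fun y => pd3 a (fun z => v z c) y - pd3 b (fun z => v z d) y) x
        = pd3 j (pd3 a (fun z => v z c)) x - pd3 j (pd3 b (fun z => v z d)) x :=
    fun j a b c d => pd3_sub (dD a c x) (dD b d x) j
  have fin2 : ∀ h : 2 < 3, (⟨2, h⟩ : Fin 3) = 2 := fun _ => rfl
  funext i
  fin_cases i <;>
    simp only [curl3, convect3, mcross3, fin2, Matrix.cons_val_zero, Matrix.cons_val_one,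
      Matrix.head_cons, Matrix.cons_val_two, Matrix.tail_cons, Fin.isValue, Fin.zero_eta,
      Fin.mk_one, Fin.sum_univ_three, E, F] <;> ring
end

section
/- Let n be a positive integer, φ(x,y) = sin(nπx) sin(nπy), β = (∂_y φ, −∂_x φ), p(x,y) = n²π² (cos²(nπx) − sin²(nπy))/2, let σ : ℝ² → ℝ be continuous, and set f = σβ. Then u = β and p solve the linear model problem pointwise on the unit square: div(u ⊗ β) + σ u + ∇p = f and div u = 0 on (0,1)², and u·n = 0 on the boundary of the unit square (i.e. β₁(0,y) = β₁(1,y) = 0 for all y and β₂(x,0) = β₂(x,1) = 0 for all x). -/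
open Real

/-- The streamfunction `φ(x,y) = sin(nπx) sin(nπy)`. -/
noncomputable def phiN (n : ℕ) (x y : ℝ) : ℝ :=
  Real.sin (n * π * x) * Real.sin (n * π * y)

/-- First component of `β = (∂_y φ, −∂_x φ)`. -/
noncomputable def beta1 (n : ℕ) (x y : ℝ) : ℝ :=
  deriv (fun t => phiN n x t) y

/-- Second component of `β = (∂_y φ, −∂_x φ)`. -/
noncomputable def beta2 (n : ℕ) (x y : ℝ) : ℝ :=
  -deriv (fun s => phiN n s y) x

/-- The pressure `p(x,y) = n²π² (cos²(nπx) − sin²(nπy))/2`. -/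
noncomputable def pVortex (n : ℕ) (x y : ℝ) : ℝ :=
  (n : ℝ) ^ 2 * π ^ 2 * ((Real.cos (n * π * x)) ^ 2 - (Real.sin (n * π * y)) ^ 2) / 2

lemma hsA (a t : ℝ) : HasDerivAt (fun s : ℝ => Real.sin (a*s)) (a * Real.cos (a*t)) t := by
  simpa [mul_comm, Function.comp_def] using (Real.hasDerivAt_sin (a*t)).comp t ((hasDerivAt_id t).const_mul a)

lemma hcA (a t : ℝ) : HasDerivAt (fun s : ℝ => Real.cos (a*s)) (-(a * Real.sin (a*t))) t := by
  simpa [mul_comm, Function.comp_def] using (Real.hasDerivAt_cos (a*t)).comp t ((hasDerivAt_id t).const_mul a)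

lemma beta1_eq (n : ℕ) (x y : ℝ) :
    beta1 n x y = Real.sin (n*π*x) * (n*π * Real.cos (n*π*y)) := by
  unfold beta1 phiN
  exact ((hsA (n*π) y).const_mul (Real.sin (n*π*x))).deriv

lemma beta2_eq (n : ℕ) (x y : ℝ) :
    beta2 n x y = -(n*π * Real.cos (n*π*x) * Real.sin (n*π*y)) := by
  unfold beta2 phiN
  rw [((hsA (n*π) x).mul_const (Real.sin (n*π*y))).deriv]

/-- With `φ(x,y) = sin(nπx) sin(nπy)`, `β = (∂_y φ, −∂_x φ)`,
`p(x,y) = n²π² (cos²(nπx) − sin²(nπy))/2`, `σ : ℝ² → ℝ` continuous and `f = σβ`,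
the pair `u = β`, `p` solves the linear model problem on the unit square:
`div(u ⊗ β) + σ u + ∇p = σ β` and `div u = 0` on `(0,1)²`, together with the
boundary condition `u·n = 0` on the boundary of the unit square. -/
theorem stmt6 (n : ℕ) (hn : 0 < n) (σ : ℝ × ℝ → ℝ) (hσ : Continuous σ) :
    -- momentum equation div(u ⊗ β) + σ u + ∇p = σ β, componentwise, on (0,1)²
    (∀ x y : ℝ, x ∈ Set.Ioo (0 : ℝ) 1 → y ∈ Set.Ioo (0 : ℝ) 1 →
      (deriv (fun s => beta1 n s y * beta1 n s y) x
          + deriv (fun t => beta1 n x t * beta2 n x t) y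
          + σ (x, y) * beta1 n x y + deriv (fun s => pVortex n s y) x
        = σ (x, y) * beta1 n x y) ∧
      (deriv (fun s => beta2 n s y * beta1 n s y) x
          + deriv (fun t => beta2 n x t * beta2 n x t) y
          + σ (x, y) * beta2 n x y + deriv (fun t => pVortex n x t) y
        = σ (x, y) * beta2 n x y)) ∧
    -- incompressibility div u = 0 on (0,1)²
    (∀ x y : ℝ, x ∈ Set.Ioo (0 : ℝ) 1 → y ∈ Set.Ioo (0 : ℝ) 1 →
      deriv (fun s => beta1 n s y) x + deriv (fun t => beta2 n x t) y = 0) ∧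
    -- boundary condition u·n = 0 on the boundary of the unit square
    (∀ y : ℝ, beta1 n 0 y = 0 ∧ beta1 n 1 y = 0) ∧
    (∀ x : ℝ, beta2 n x 0 = 0 ∧ beta2 n x 1 = 0) := by
  refine ⟨?_, ?_, ?_, ?_⟩
  · intro x y _ _
    constructor
    · have f1 : (fun s => beta1 n s y * beta1 n s y)
          = fun s => Real.sin ((n:ℝ)*π*s)^2 * ((n:ℝ)*π * Real.cos ((n:ℝ)*π*y))^2 := by
        funext s; rw [beta1_eq]; ring
      have f2 : (fun t => beta1 n x t * beta2 n x t)
          = fun t => (-(((n:ℝ)*π)^2 * Real.sin ((n:ℝ)*π*x) * Real.cos ((n:ℝ)*π*x)))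
              * (Real.cos ((n:ℝ)*π*t) * Real.sin ((n:ℝ)*π*t)) := by
        funext t; rw [beta1_eq, beta2_eq]; ring
      have f3 : (fun s => pVortex n s y)
          = fun s => ((n:ℝ)*π)^2 * (Real.cos ((n:ℝ)*π*s)^2 - Real.sin ((n:ℝ)*π*y)^2) / 2 := by
        funext s; unfold pVortex; ring
      rw [f1, f2, f3,
        (((hsA ((n:ℝ)*π) x).fun_pow 2).mul_const (((n:ℝ)*π * Real.cos ((n:ℝ)*π*y))^2)).deriv,
        (((hcA ((n:ℝ)*π) y).fun_mul (hsA ((n:ℝ)*π) y)).const_mul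
          (-(((n:ℝ)*π)^2 * Real.sin ((n:ℝ)*π*x) * Real.cos ((n:ℝ)*π*x)))).deriv,
        (((((hcA ((n:ℝ)*π) x).fun_pow 2).sub_const (Real.sin ((n:ℝ)*π*y)^2)).const_mul
          (((n:ℝ)*π)^2)).div_const 2).deriv]
      have pyth := Real.sin_sq_add_cos_sq ((n:ℝ)*π*y)
      linear_combination (((n:ℝ)*π)^3 * Real.sin ((n:ℝ)*π*x) * Real.cos ((n:ℝ)*π*x)) * pyth
    · have f1 : (fun s => beta2 n s y * beta1 n s y)
          = fun s => (-(((n:ℝ)*π)^2 * Real.sin ((n:ℝ)*π*y) * Real.cos ((n:ℝ)*π*y)))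
              * (Real.cos ((n:ℝ)*π*s) * Real.sin ((n:ℝ)*π*s)) := by
        funext s; rw [beta1_eq, beta2_eq]; ring
      have f2 : (fun t => beta2 n x t * beta2 n x t)
          = fun t => Real.sin ((n:ℝ)*π*t)^2 * ((n:ℝ)*π * Real.cos ((n:ℝ)*π*x))^2 := by
        funext t; rw [beta2_eq]; ring
      have f3 : (fun t => pVortex n x t)
          = fun t => ((n:ℝ)*π)^2 * (Real.cos ((n:ℝ)*π*x)^2 - Real.sin ((n:ℝ)*π*t)^2) / 2 := by
        funext t; unfold pVortex; ring
      rw [f1, f2, f3,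
        (((hcA ((n:ℝ)*π) x).fun_mul (hsA ((n:ℝ)*π) x)).const_mul
          (-(((n:ℝ)*π)^2 * Real.sin ((n:ℝ)*π*y) * Real.cos ((n:ℝ)*π*y)))).deriv,
        (((hsA ((n:ℝ)*π) y).fun_pow 2).mul_const (((n:ℝ)*π * Real.cos ((n:ℝ)*π*x))^2)).deriv,
        (((((hsA ((n:ℝ)*π) y).fun_pow 2).const_sub (Real.cos ((n:ℝ)*π*x)^2)).const_mul
          (((n:ℝ)*π)^2)).div_const 2).deriv]
      have pyth := Real.sin_sq_add_cos_sq ((n:ℝ)*π*x)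
      linear_combination (((n:ℝ)*π)^3 * Real.sin ((n:ℝ)*π*y) * Real.cos ((n:ℝ)*π*y)) * pyth
  · intro x y _ _
    have g1 : (fun s => beta1 n s y)
        = fun s => Real.sin ((n:ℝ)*π*s) * ((n:ℝ)*π * Real.cos ((n:ℝ)*π*y)) := by
      funext s; exact beta1_eq n s y
    have g2 : (fun t => beta2 n x t)
        = fun t => (-((n:ℝ)*π * Real.cos ((n:ℝ)*π*x))) * Real.sin ((n:ℝ)*π*t) := by
      funext t; rw [beta2_eq]; ring
    rw [g1, g2,
      ((hsA ((n:ℝ)*π) x).mul_const (((n:ℝ)*π * Real.cos ((n:ℝ)*π*y)))).deriv,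
      ((hsA ((n:ℝ)*π) y).const_mul (-((n:ℝ)*π * Real.cos ((n:ℝ)*π*x)))).deriv]
    ring
  · intro y
    constructor <;> rw [beta1_eq] <;> simp [Real.sin_nat_mul_pi]
  · intro x
    constructor <;> rw [beta2_eq] <;> simp [Real.sin_nat_mul_pi]
end

section
/- Let σ : ℝ^d → ℝ be continuous with σ(x) ≥ σ₀ > 0 for all x, let β : ℝ^d → ℝ^d be continuously differentiable with div β = 0, let p : ℝ^d → ℝ be continuously differentiable, and let u : ℝ^d → ℝ^d be continuously differentiable with compact support and div u = 0. If div(u ⊗ β) + σ u + ∇p = 0 pointwise on ℝ^d, then u ≡ 0. -/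
open MeasureTheory Finset

/-- Partial derivative in direction `j` of a scalar function on `ℝ^d`. -/
noncomputable def pd (d : ℕ) (j : Fin d) (f : (Fin d → ℝ) → ℝ) (x : Fin d → ℝ) : ℝ :=
  fderiv ℝ f x (Pi.single j 1)

lemma pd_mul {d : ℕ} (j : Fin d) (f g : (Fin d → ℝ) → ℝ) (x : Fin d → ℝ)
    (hf : DifferentiableAt ℝ f x) (hg : DifferentiableAt ℝ g x) :
    pd d j (fun y => f y * g y) x = f x * pd d j g x + g x * pd d j f x := by
  unfold pd
  rw [fderiv_fun_mul hf hg]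
  simp [smul_eq_mul]

lemma pd_sum {d : ℕ} (j : Fin d) (F : Fin d → ((Fin d → ℝ) → ℝ)) (x : Fin d → ℝ)
    (hF : ∀ i, DifferentiableAt ℝ (F i) x) :
    pd d j (fun y => ∑ i, F i y) x = ∑ i, pd d j (F i) x := by
  unfold pd
  rw [fderiv_fun_sum (fun i _ => hF i)]
  simp

lemma integral_pd_eq_zero {d : ℕ} (j : Fin d) (f : (Fin d → ℝ) → ℝ)
    (hf : ContDiff ℝ 1 f) (h : HasCompactSupport f) :
    ∫ x, pd d j f x = 0 := by
  have hd := hf.differentiable one_ne_zero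
  have hc : Continuous fun x => fderiv ℝ f x (Pi.single j 1) :=
    (hf.continuous_fderiv one_ne_zero).clm_apply continuous_const
  have hcs2 : HasCompactSupport fun x => fderiv ℝ f x (Pi.single j 1) :=
    (h.fderiv ℝ).comp_left (g := fun A : (Fin d → ℝ) →L[ℝ] ℝ => A (Pi.single j 1)) rfl
  have key := integral_mul_fderiv_eq_neg_fderiv_mul_of_integrable
    (f := fun _ : (Fin d → ℝ) => (1:ℝ)) (g := f) (v := Pi.single j 1) (μ := volume)
    ?_ ?_ ?_ (fun x _ => differentiableAt_const (1:ℝ)) (fun x _ => hd x)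
  · simpa [fderiv_const, pd] using key
  · simpa [fderiv_const] using (integrable_zero (Fin d → ℝ) ℝ volume)
  · simpa using hc.integrable_of_hasCompactSupport hcs2
  · simpa using hf.continuous.integrable_of_hasCompactSupport h

/-- Uniqueness mechanism for the linear model problem: let `σ : ℝ^d → ℝ` be continuous with
`σ ≥ σ₀ > 0`, let `β` be `C¹` with `div β = 0`, let `p` be `C¹`, and let `u` be `C¹` with
compact support and `div u = 0`. If `div(u ⊗ β) + σ u + ∇p = 0` pointwise on `ℝ^d`,
where `(div(u ⊗ β))_i = Σ_j ∂_j (u_i β_j)`, then `u ≡ 0`. -/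
theorem stmt10 (d : ℕ) (σ : (Fin d → ℝ) → ℝ) (σ₀ : ℝ) (hσc : Continuous σ)
    (hσ₀ : 0 < σ₀) (hσ : ∀ x, σ₀ ≤ σ x)
    (β : (Fin d → ℝ) → Fin d → ℝ) (hβ : ContDiff ℝ 1 β)
    (hdivβ : ∀ x, ∑ j, pd d j (fun y => β y j) x = 0)
    (p : (Fin d → ℝ) → ℝ) (hp : ContDiff ℝ 1 p)
    (u : (Fin d → ℝ) → Fin d → ℝ) (hu : ContDiff ℝ 1 u) (hcs : HasCompactSupport u)
    (hdivu : ∀ x, ∑ j, pd d j (fun y => u y j) x = 0)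
    (heq : ∀ (x : Fin d → ℝ) (i : Fin d),
      (∑ j, pd d j (fun y => u y i * β y j) x) + σ x * u x i + pd d i p x = 0) :
    ∀ x, u x = 0 := by
  classical
  have hui : ∀ i, ContDiff ℝ 1 (fun y => u y i) := fun i => contDiff_pi.1 hu i
  have hβi : ∀ i, ContDiff ℝ 1 (fun y => β y i) := fun i => contDiff_pi.1 hβ i
  have huid : ∀ i x, DifferentiableAt ℝ (fun y => u y i) x := fun i x =>
    (hui i).differentiable one_ne_zero x
  have hβid : ∀ i x, DifferentiableAt ℝ (fun y => β y i) x := fun i x =>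
    (hβi i).differentiable one_ne_zero x
  have hpd : ∀ x, DifferentiableAt ℝ p x := fun x => hp.differentiable one_ne_zero x
  -- the squared norm
  set q : (Fin d → ℝ) → ℝ := fun x => ∑ i, u x i * u x i with hq_def
  have hq : ContDiff ℝ 1 q := ContDiff.sum fun i _ => (hui i).mul (hui i)
  have hqd : ∀ x, DifferentiableAt ℝ q x := fun x => hq.differentiable one_ne_zero x
  have hq0 : ∀ x, u x = 0 → q x = 0 := by
    intro x hx; simp [hq_def, hx]
  have pd_q : ∀ (j : Fin d) x,
      pd d j q x = ∑ i, (u x i * pd d j (fun y => u y i) x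
        + u x i * pd d j (fun y => u y i) x) := by
    intro j x
    rw [show q = fun y => ∑ i, (fun z => u z i * u z i) y from rfl]
    rw [pd_sum j (fun i => fun z => u z i * u z i) x (fun i => ((huid i x).mul (huid i x)))]
    exact Finset.sum_congr rfl fun i _ => pd_mul j _ _ x (huid i x) (huid i x)
  -- the flux field
  set F : Fin d → (Fin d → ℝ) → ℝ := fun j x => q x * β x j + 2 * (p x * u x j) with hF_def
  have hF : ∀ j, ContDiff ℝ 1 (F j) :=
    fun j => (hq.mul (hβi j)).add (contDiff_const.mul (hp.mul (hui j)))
  have hFcs : ∀ j, HasCompactSupport (F j) := by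
    intro j
    refine hcs.mono ?_
    intro x hx
    simp only [Function.mem_support, ne_eq] at hx ⊢
    intro hux
    apply hx
    have huj : u x j = 0 := by rw [hux]; rfl
    simp [hF_def, hq0 x hux, huj]
  -- key pointwise identity
  have key : ∀ x, ∑ j, pd d j (F j) x = -(2 * (σ x * q x)) := by
    intro x
    set s1 : ℝ := ∑ j, ∑ i, u x i * (β x j * pd d j (fun y => u y i) x) with hs1
    set s2 : ℝ := ∑ i, u x i * pd d i p x with hs2
    -- from the equation: s1 + σ q + s2 = 0
    have hEq : s1 + σ x * q x + s2 = 0 := by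
      have h1 : ∀ i, u x i * (∑ j, pd d j (fun y => u y i * β y j) x)
          + σ x * (u x i * u x i) + u x i * pd d i p x = 0 := by
        intro i
        linear_combination (u x i) * heq x i
      have h2 : ∀ i, u x i * (∑ j, pd d j (fun y => u y i * β y j) x)
          = u x i * u x i * (∑ j, pd d j (fun y => β y j) x)
            + ∑ j, u x i * (β x j * pd d j (fun y => u y i) x) := by
        intro i
        have h3 : ∀ j, pd d j (fun y => u y i * β y j) x
            = u x i * pd d j (fun y => β y j) x + β x j * pd d j (fun y => u y i) x :=
          fun j => pd_mul j _ _ x (huid i x) (hβid j x)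
        simp only [h3]
        rw [Finset.mul_sum, Finset.mul_sum, ← Finset.sum_add_distrib]
        exact Finset.sum_congr rfl fun j _ => by ring
      have h4 : ∑ i, (u x i * (∑ j, pd d j (fun y => u y i * β y j) x)
          + σ x * (u x i * u x i) + u x i * pd d i p x) = 0 :=
        Finset.sum_eq_zero fun i _ => h1 i
      rw [Finset.sum_add_distrib, Finset.sum_add_distrib] at h4
      have h5 : ∑ i, u x i * (∑ j, pd d j (fun y => u y i * β y j) x) = s1 := by
        rw [hs1, Finset.sum_comm]
        refine Finset.sum_congr rfl fun i _ => ?_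
        rw [h2 i, hdivβ x]
        ring
      have h6 : ∑ i, σ x * (u x i * u x i) = σ x * q x := by
        simp only [hq_def]
        rw [Finset.mul_sum]
      rw [h5, h6, ← hs2] at h4
      exact h4
    -- divergence of F equals 2*s1 + 2*s2
    have hdivF : ∑ j, pd d j (F j) x = 2 * s1 + 2 * s2 := by
      have hA : ∀ j, pd d j (F j) x
          = (q x * pd d j (fun y => β y j) x + β x j * pd d j q x)
            + 2 * (p x * pd d j (fun y => u y j) x + u x j * pd d j p x) := by
        intro j
        have e1 : F j = fun y => (fun z => q z * β z j) y + (fun z => 2 * (p z * u z j)) y := rfl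
        have d1 : DifferentiableAt ℝ (fun z => q z * β z j) x := (hqd x).mul (hβid j x)
        have d2 : DifferentiableAt ℝ (fun z => p z * u z j) x := (hpd x).mul (huid j x)
        have d3 : DifferentiableAt ℝ (fun z => 2 * (p z * u z j)) x :=
          (differentiableAt_const (2:ℝ)).mul d2
        have : pd d j (F j) x = pd d j (fun z => q z * β z j) x
            + pd d j (fun z => 2 * (p z * u z j)) x := by
          unfold pd
          rw [e1, fderiv_fun_add d1 d3]
          simp
        rw [this, pd_mul j _ _ x (hqd x) (hβid j x)]
        have : pd d j (fun z => 2 * (p z * u z j)) x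
            = 2 * pd d j (fun z => p z * u z j) x := by
          unfold pd
          rw [fderiv_const_mul d2]
          simp
        rw [this, pd_mul j _ _ x (hpd x) (huid j x)]
      calc ∑ j, pd d j (F j) x
          = ∑ j, ((q x * pd d j (fun y => β y j) x + β x j * pd d j q x)
            + 2 * (p x * pd d j (fun y => u y j) x + u x j * pd d j p x)) :=
            Finset.sum_congr rfl fun j _ => hA j
        _ = q x * (∑ j, pd d j (fun y => β y j) x)
            + (∑ j, β x j * pd d j q x)
            + 2 * (p x * (∑ j, pd d j (fun y => u y j) x))
            + 2 * (∑ j, u x j * pd d j p x) := by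
            simp only [Finset.mul_sum, ← Finset.sum_add_distrib]
            exact Finset.sum_congr rfl fun j _ => by ring
        _ = (∑ j, β x j * pd d j q x) + 2 * s2 := by
            rw [hdivβ x, hdivu x, hs2]; ring
        _ = 2 * s1 + 2 * s2 := by
            congr 1
            rw [hs1, Finset.mul_sum]
            refine Finset.sum_congr rfl fun j _ => ?_
            rw [pd_q j x, Finset.mul_sum, Finset.mul_sum]
            refine Finset.sum_congr rfl fun i _ => ?_
            ring
    rw [hdivF]; linarith
  -- integrate
  have hint : ∫ x, σ x * q x = 0 := by
    have h1 : ∫ x, ∑ j, pd d j (F j) x = 0 := by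
      rw [integral_finset_sum _ (fun j _ => ?_)]
      · exact Finset.sum_eq_zero fun j _ => integral_pd_eq_zero j (F j) (hF j) (hFcs j)
      · have hc : Continuous fun x => pd d j (F j) x :=
          ((hF j).continuous_fderiv one_ne_zero).clm_apply continuous_const
        have hcs2 : HasCompactSupport fun x => pd d j (F j) x :=
          ((hFcs j).fderiv ℝ).comp_left
            (g := fun A : (Fin d → ℝ) →L[ℝ] ℝ => A (Pi.single j 1)) rfl
        exact hc.integrable_of_hasCompactSupport hcs2
    have h2 : ∫ x, (-(2 * (σ x * q x))) = 0 := by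
      rw [← h1]
      exact integral_congr_ae (Filter.EventuallyEq.of_eq (funext fun x => (key x).symm))
    rw [integral_neg, neg_eq_zero, integral_const_mul] at h2
    linarith
  -- conclude
  have hnn : ∀ x, 0 ≤ σ x * q x := by
    intro x
    apply mul_nonneg (le_of_lt (lt_of_lt_of_le hσ₀ (hσ x)))
    exact Finset.sum_nonneg fun i _ => mul_self_nonneg _
  have hi : Integrable (fun x => σ x * q x) := by
    apply (hσc.mul hq.continuous).integrable_of_hasCompactSupport
    apply hcs.mono
    intro x hx
    simp only [Function.mem_support, ne_eq] at hx ⊢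
    intro hux
    exact hx (by simp [hq0 x hux])
  have hae : (fun x => σ x * q x) =ᵐ[volume] 0 :=
    (integral_eq_zero_iff_of_nonneg hnn hi).1 hint
  have hzero : ∀ x, σ x * q x = 0 := by
    have hc : Continuous fun x => σ x * q x := hσc.mul hq.continuous
    have := hc.ae_eq_iff_eq (volume : Measure (Fin d → ℝ)) continuous_const |>.1 hae
    exact fun x => congrFun this x
  intro x
  have hqx : q x = 0 := by
    have := hzero x
    have hσx : 0 < σ x := lt_of_lt_of_le hσ₀ (hσ x)
    exact (mul_eq_zero.1 this).resolve_left (ne_of_gt hσx)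
  funext i
  have := (Finset.sum_eq_zero_iff_of_nonneg
    (fun i _ => mul_self_nonneg (u x i))).1 hqx i (Finset.mem_univ i)
  have := mul_self_eq_zero.1 this
  simpa using this
end
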